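/- Let f_1, …, f_k : {0,1}^n → {0,1} satisfy f_i(0^n) = f_i(1^n) = 0 for all i ∈ [k], and define F : {0,1}^{nk} → {0,1} on variable-disjoint inputs by F(x^{(1)}, …, x^{(k)}) = ⋁_{i=1}^k f_i(x^{(i)}). Then alt(F) = Σ_{i=1}^k alt(f_i). -/

import Mathlib

open scoped Classical

/-- Pointwise XOR of Boolean vectors. -/
def bxor {n : ℕ} (x y : Fin n → Bool) : Fin n → Bool := fun i => Bool.xor (x i) (y i)

/-- Indicator vector of a set of coordinates. -/
def eB {n : ℕ} (B : Finset (Fin n)) : Fin n → Bool := fun i => decide (i ∈ B)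

/-- Standard basis vector. -/
def eI {n : ℕ} (i : Fin n) : Fin n → Bool := fun j => decide (j = i)

/-- Sensitivity of `f` at `a`. -/
def sensAt {n : ℕ} (f : (Fin n → Bool) → Bool) (a : Fin n → Bool) : ℕ :=
  (Finset.univ.filter fun i : Fin n => f (bxor a (eI i)) ≠ f a).card

/-- Sensitivity of `f`. -/
def sens {n : ℕ} (f : (Fin n → Bool) → Bool) : ℕ :=
  Finset.univ.sup fun a : Fin n → Bool => sensAt f a

/-- Block sensitivity of `f` at `a`: the largest number of pairwise disjoint nonempty
sensitive blocks. -/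
def bsAt {n : ℕ} (f : (Fin n → Bool) → Bool) (a : Fin n → Bool) : ℕ :=
  Finset.univ.sup fun S : Finset (Finset (Fin n)) =>
    if (∀ B ∈ S, B.Nonempty ∧ f (bxor a (eB B)) ≠ f a) ∧
       (∀ B ∈ S, ∀ C ∈ S, B ≠ C → Disjoint B C)
    then S.card else 0

/-- Block sensitivity of `f`. -/
def bs {n : ℕ} (f : (Fin n → Bool) → Bool) : ℕ :=
  Finset.univ.sup fun a : Fin n → Bool => bsAt f a

/-- `x` is a monotone chain `0^n = x^0 ≺ x^1 ≺ ⋯ ≺ x^n = 1^n` in the Boolean cube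
(each step strictly increases, hence flips exactly one coordinate from 0 to 1). -/
def IsChainOn {n : ℕ} (x : Fin (n + 1) → Fin n → Bool) : Prop :=
  x 0 = (fun _ => false) ∧ x (Fin.last n) = (fun _ => true) ∧
    ∀ i : Fin n, (∀ j, x i.castSucc j ≤ x i.succ j) ∧ x i.castSucc ≠ x i.succ

/-- Alternation of `f` along a chain `x`. -/
def altChain {n : ℕ} (f : (Fin n → Bool) → Bool) (x : Fin (n + 1) → Fin n → Bool) : ℕ :=
  (Finset.univ.filter fun i : Fin n => f (x i.succ) ≠ f (x i.castSucc)).card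

/-- Alternation of `f`: maximal alternation along a chain. -/
noncomputable def altF {n : ℕ} (f : (Fin n → Bool) → Bool) : ℕ :=
  Finset.univ.sup fun x : Fin (n + 1) → Fin n → Bool =>
    if IsChainOn x then altChain f x else 0

/-- Shift-invariant alternation: minimum alternation over all shifts of `f`. -/
noncomputable def saltF {n : ℕ} (f : (Fin n → Bool) → Bool) : ℕ :=
  (Finset.univ : Finset (Fin n → Bool)).inf' Finset.univ_nonempty
    fun b => altF fun x => f (bxor x b)

theorem mulIdx_lt {k n : ℕ} (i : Fin k) (j : Fin n) : i.1 * n + j.1 < k * n := by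
  calc i.1 * n + j.1 < i.1 * n + n := Nat.add_lt_add_left j.isLt _
    _ = (i.1 + 1) * n := by ring
    _ ≤ k * n := Nat.mul_le_mul_right n i.isLt
namespace Stmt3Aux

/-- Chain built from a flip-time function: coordinate `j` flips at step `π j`. -/
def chainOfPi {m : ℕ} (π : Fin m → Fin m) : Fin (m + 1) → Fin m → Bool :=
  fun t j => decide ((π j).1 < t.1)

lemma isChainOn_chainOfPi {m : ℕ} (π : Fin m → Fin m) (hπ : Function.Surjective π) :
    IsChainOn (chainOfPi π) := by
  refine ⟨?_, ?_, ?_⟩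
  · funext j; simp [chainOfPi]
  · funext j; simp [chainOfPi, (π j).isLt]
  · intro i
    constructor
    · intro j
      simp only [chainOfPi, Fin.coe_castSucc, Fin.val_succ]
      by_cases h : (π j).1 < i.1
      · have h2 : (π j).1 < i.1 + 1 := Nat.lt_succ_of_lt h
        simp [h, h2]
      · simp [h]
    · obtain ⟨j, hj⟩ := hπ i
      intro heq
      have := congrFun heq j
      simp [chainOfPi, hj] at this

lemma chain_mono {m : ℕ} {x : Fin (m + 1) → Fin m → Bool} (hx : IsChainOn x)
    (j : Fin m) : ∀ (v u : Fin (m + 1)), u ≤ v → x u j = true → x v j = true := by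
  intro v
  induction v using Fin.induction with
  | zero =>
    intro u hu h
    have : u = 0 := le_antisymm hu (Fin.zero_le u)
    rwa [this] at h
  | succ i ih =>
    intro u hu h
    have hu' : u.1 ≤ i.1 + 1 := hu
    rcases Nat.lt_or_ge u.1 (i.1 + 1) with h2 | h2
    · have hle : u ≤ i.castSucc := by
        simp [Fin.le_def, Fin.coe_castSucc]; omega
      have hc : x i.castSucc j = true := ih u hle h
      have := (hx.2.2 i).1 j
      rw [hc] at this
      exact le_antisymm (by simp) this
    · have : u = i.succ := Fin.ext (by simp [Fin.val_succ]; omega)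
      rwa [this] at h

/-- Every chain arises from a bijective flip-time function. -/
lemma exists_pi {m : ℕ} {x : Fin (m + 1) → Fin m → Bool} (hx : IsChainOn x) :
    ∃ π : Fin m → Fin m, Function.Bijective π ∧
      ∀ t j, x t j = decide ((π j).1 < t.1) := by
  have hex : ∀ j : Fin m, ∃ i : Fin m, x i.castSucc j = false ∧ x i.succ j = true := by
    intro j
    by_contra hcon
    push_neg at hcon
    have hconst : ∀ v : Fin (m + 1), x v j = false := by
      intro v
      induction v using Fin.induction with
      | zero => rw [hx.1]
      | succ i ih =>
        by_contra htrue
        have ht : x i.succ j = true := by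
          cases h : x i.succ j
          · exact absurd h htrue
          · rfl
        exact absurd ht (by simpa [ih] using hcon i ih)
    have := hconst (Fin.last m)
    rw [hx.2.1] at this
    simp at this
  choose π hπ1 hπ2 using hex
  have hcf : ∀ t j, x t j = decide ((π j).1 < t.1) := by
    intro t j
    by_cases h : (π j).1 < t.1
    · have : x t j = true := chain_mono hx j t (π j).succ (by simp [Fin.le_def]; omega) (hπ2 j)
      simp [this, h]
    · have : x t j = false := by
        cases hv : x t j
        · rfl
        · have := chain_mono hx j (π j).castSucc t (by simp [Fin.le_def]; omega) hv
          rw [hπ1 j] at this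
          exact absurd this (by simp)
      simp [this, h]
  refine ⟨π, ?_, hcf⟩
  rw [← Finite.injective_iff_bijective, Finite.injective_iff_surjective]
  intro i
  have hne := (hx.2.2 i).2
  rw [Function.ne_iff] at hne
  obtain ⟨j, hj⟩ := hne
  refine ⟨j, ?_⟩
  rw [hcf i.castSucc j, hcf i.succ j] at hj
  simp only [Fin.coe_castSucc, Fin.val_succ] at hj
  have : (π j).1 = i.1 := by
    by_contra hne
    exact hj (decide_eq_decide.mpr (by omega))
  exact Fin.ext this

lemma altChain_le_altF {n : ℕ} {f : (Fin n → Bool) → Bool}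
    {x : Fin (n + 1) → Fin n → Bool} (hx : IsChainOn x) : altChain f x ≤ altF f := by
  have := Finset.le_sup (f := fun x : Fin (n + 1) → Fin n → Bool =>
    if IsChainOn x then altChain f x else 0) (Finset.mem_univ x)
  simpa [hx, altF] using this

lemma exists_max_chain {n : ℕ} (f : (Fin n → Bool) → Bool) :
    ∃ x, IsChainOn x ∧ altChain f x = altF f := by
  obtain ⟨x, -, hx⟩ := Finset.exists_mem_eq_sup Finset.univ Finset.univ_nonempty
      (fun x : Fin (n + 1) → Fin n → Bool => if IsChainOn x then altChain f x else 0)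
  by_cases h : IsChainOn x
  · refine ⟨x, h, ?_⟩
    have : altF f = if IsChainOn x then altChain f x else 0 := hx
    rw [this, if_pos h]
  · have hid := isChainOn_chainOfPi (m := n) id Function.surjective_id
    refine ⟨chainOfPi id, hid, ?_⟩
    have h0 : altF f = 0 := by
      have : altF f = if IsChainOn x then altChain f x else 0 := hx
      rw [this, if_neg h]
    have := altChain_le_altF (f := f) hid
    omega

lemma altF_eq_zero_of_eq_zero {m : ℕ} (hm : m = 0) (g : (Fin m → Bool) → Bool) :
    altF g = 0 := by
  refine Nat.le_antisymm ?_ (Nat.zero_le _)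
  apply Finset.sup_le
  intro x _
  have : IsEmpty (Fin m) := by rw [hm]; infer_instance
  split <;> simp [altChain, Finset.univ_eq_empty]

end Stmt3Aux
namespace Stmt3Aux

def idx {k n : ℕ} (i : Fin k) (j : Fin n) : Fin (k * n) := ⟨i.1 * n + j.1, mulIdx_lt i j⟩

lemma div_helper {n : ℕ} (hn : 0 < n) (b r : ℕ) (hr : r < n) : (b * n + r) / n = b := by
  rw [mul_comm b n, Nat.mul_add_div hn, Nat.div_eq_of_lt hr, add_zero]

lemma mod_helper {n : ℕ} (b r : ℕ) (hr : r < n) : (b * n + r) % n = r := by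
  rw [mul_comm b n, Nat.mul_add_mod, Nat.mod_eq_of_lt hr]

lemma unique_div {n : ℕ} (hn : 0 < n) {a b p q : ℕ} (hp : p < n) (hq : q < n)
    (h : a * n + p = b * n + q) : a = b ∧ p = q := by
  constructor
  · rw [← div_helper hn a p hp, h, div_helper hn b q hq]
  · rw [← mod_helper a p hp, h, mod_helper b q hq]

lemma exists_rank {n M : ℕ} (g : Fin n → Fin M) (hg : Function.Injective g) :
    ∃ ρ : Fin n → Fin n, Function.Bijective ρ ∧ ∀ a b, (ρ a ≤ ρ b ↔ g a ≤ g b) := by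
  classical
  have hcard : (Finset.image g Finset.univ).card = n := by
    rw [Finset.card_image_of_injective _ hg, Finset.card_univ, Fintype.card_fin]
  set e := (Finset.image g Finset.univ).orderIsoOfFin hcard with he
  refine ⟨fun a => e.symm ⟨g a, by simp⟩, ?_, ?_⟩
  · rw [← Finite.injective_iff_bijective]
    intro a b hab
    have := e.symm.injective hab
    exact hg (Subtype.ext_iff.mp this)
  · intro a b
    rw [e.symm.le_iff_le]
    exact Subtype.mk_le_mk

/-- total version of a family of permutations, for arithmetic convenience -/
def piv {k n : ℕ} (π : Fin k → Fin n → Fin n) (i j : ℕ) : ℕ :=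
  if h : i < k ∧ j < n then (π ⟨i, h.1⟩ ⟨j, h.2⟩).1 else 0

lemma piv_lt {k n : ℕ} (π : Fin k → Fin n → Fin n) (hn : 0 < n) (i j : ℕ) :
    piv π i j < n := by
  unfold piv
  split
  · exact Fin.is_lt _
  · exact hn

lemma piv_eq {k n : ℕ} (π : Fin k → Fin n → Fin n) (i : Fin k) (j : Fin n) :
    piv π i.1 j.1 = (π i j).1 := by
  simp [piv, i.isLt, j.isLt]

def bigPi {k n : ℕ} (hn : 0 < n) (π : Fin k → Fin n → Fin n) (c : Fin (k * n)) :
    Fin (k * n) :=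
  idx (⟨c.1 / n, (Nat.div_lt_iff_lt_mul hn).mpr c.isLt⟩ : Fin k)
      (⟨piv π (c.1 / n) (c.1 % n), piv_lt π hn _ _⟩ : Fin n)

lemma bigPi_val {k n : ℕ} (hn : 0 < n) (π : Fin k → Fin n → Fin n) (c : Fin (k * n)) :
    (bigPi hn π c).1 = (c.1 / n) * n + piv π (c.1 / n) (c.1 % n) := rfl

lemma bigPi_idx_val {k n : ℕ} (hn : 0 < n) (π : Fin k → Fin n → Fin n)
    (b : Fin k) (j : Fin n) :
    (bigPi hn π (idx b j)).1 = b.1 * n + (π b j).1 := by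
  rw [bigPi_val]
  show ((b.1 * n + j.1) / n) * n + piv π ((b.1 * n + j.1) / n) ((b.1 * n + j.1) % n) = _
  rw [div_helper hn _ _ j.isLt, mod_helper _ _ j.isLt, piv_eq]

lemma bigPi_bijective {k n : ℕ} (hn : 0 < n) (π : Fin k → Fin n → Fin n)
    (hπ : ∀ i, Function.Injective (π i)) : Function.Bijective (bigPi hn π) := by
  rw [← Finite.injective_iff_bijective]
  intro c c' h
  have h1 : (c.1 / n) * n + piv π (c.1 / n) (c.1 % n)
      = (c'.1 / n) * n + piv π (c'.1 / n) (c'.1 % n) := by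
    rw [← bigPi_val hn π c, ← bigPi_val hn π c', h]
  obtain ⟨hd, hp⟩ := unique_div hn (piv_lt π hn _ _) (piv_lt π hn _ _) h1
  rw [hd] at hp
  have hk : c'.1 / n < k := (Nat.div_lt_iff_lt_mul hn).mpr c'.isLt
  have hm : c.1 % n = c'.1 % n := by
    simp only [piv] at hp
    rw [dif_pos ⟨hk, Nat.mod_lt _ hn⟩, dif_pos ⟨hk, Nat.mod_lt _ hn⟩] at hp
    exact congrArg Fin.val (hπ _ (Fin.ext hp))
  apply Fin.ext
  rw [← Nat.div_add_mod c.1 n, ← Nat.div_add_mod c'.1 n, hd, hm]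

end Stmt3Aux
theorem stmt3 (n k : ℕ) (f : Fin k → (Fin n → Bool) → Bool)
    (h0 : ∀ i, f i (fun _ => false) = false) (h1 : ∀ i, f i (fun _ => true) = false) :
    altF (fun y : Fin (k * n) → Bool =>
        decide (∃ i : Fin k, f i (fun j : Fin n => y ⟨i.1 * n + j.1, mulIdx_lt i j⟩) = true))
      = ∑ i : Fin k, altF (f i) := by
  classical
  rcases Nat.eq_zero_or_pos (k * n) with hkn | hkn
  · rw [Stmt3Aux.altF_eq_zero_of_eq_zero hkn]
    rcases Nat.mul_eq_zero.mp hkn with hk | hn'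
    · rw [Finset.sum_eq_zero]
      intro i _
      exact absurd i.isLt (by omega)
    · rw [Finset.sum_eq_zero]
      intro i _
      exact Stmt3Aux.altF_eq_zero_of_eq_zero hn' _
  have hn : 0 < n := by
    rcases Nat.eq_zero_or_pos n with h | h
    · subst h; simp at hkn
    · exact h
  have hk : 0 < k := by
    rcases Nat.eq_zero_or_pos k with h | h
    · subst h; simp at hkn
    · exact h
  set F := (fun y : Fin (k * n) → Bool =>
      decide (∃ i : Fin k, f i (fun j : Fin n => y ⟨i.1 * n + j.1, mulIdx_lt i j⟩) = true))
    with hF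
  have hFy : ∀ y : Fin (k * n) → Bool,
      F y = decide (∃ i : Fin k, f i (fun j : Fin n => y (Stmt3Aux.idx i j)) = true) :=
    fun y => rfl
  apply le_antisymm
  · -- upper bound
    apply Finset.sup_le
    intro C _
    split_ifs with hC
    swap
    · exact Nat.zero_le _
    obtain ⟨π, hπbij, hπcf⟩ := Stmt3Aux.exists_pi hC
    have hgi : ∀ i : Fin k, Function.Injective (fun j : Fin n => π (Stmt3Aux.idx i j)) := by
      intro i a b hab
      have h2 : Stmt3Aux.idx i a = Stmt3Aux.idx i b := hπbij.1 hab
      have hv : i.1 * n + a.1 = i.1 * n + b.1 := congrArg Fin.val h2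
      exact Fin.ext (Nat.add_left_cancel hv)
    choose ρ hρbij hρle using fun i => Stmt3Aux.exists_rank _ (hgi i)
    have hρleval : ∀ i a b, ((ρ i a).1 ≤ (ρ i b).1 ↔
        (π (Stmt3Aux.idx i a)).1 ≤ (π (Stmt3Aux.idx i b)).1) := by
      intro i a b
      have := hρle i a b
      simp only [Fin.le_def] at this
      exact this
    have hρltval : ∀ i a b, ((ρ i a).1 < (ρ i b).1 ↔
        (π (Stmt3Aux.idx i a)).1 < (π (Stmt3Aux.idx i b)).1) := by
      intro i a b
      have hba := hρleval i b a
      constructor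
      · intro h
        by_contra h2
        rw [not_lt] at h2
        have := hba.mpr h2
        omega
      · intro h
        by_contra h2
        rw [not_lt] at h2
        have := hba.mp h2
        omega
    have hxchain : ∀ i, IsChainOn (Stmt3Aux.chainOfPi (ρ i)) :=
      fun i => Stmt3Aux.isChainOn_chainOfPi _ (hρbij i).surjective
    have hsel : ∀ t : Fin (k * n), ∃ (i : Fin k) (j : Fin n),
        (F (C t.succ) ≠ F (C t.castSucc)) →
          ((π (Stmt3Aux.idx i j)).1 = t.1 ∧
           f i (Stmt3Aux.chainOfPi (ρ i) (ρ i j).succ)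
             ≠ f i (Stmt3Aux.chainOfPi (ρ i) (ρ i j).castSucc)) := by
      intro t
      by_cases hPt : F (C t.succ) ≠ F (C t.castSucc)
      swap
      · exact ⟨⟨0, hk⟩, ⟨0, hn⟩, fun h => absurd h hPt⟩
      · have hi : ∃ i : Fin k, f i (fun j => C t.succ (Stmt3Aux.idx i j))
            ≠ f i (fun j => C t.castSucc (Stmt3Aux.idx i j)) := by
          by_contra hcon
          push_neg at hcon
          apply hPt
          rw [hFy, hFy]
          exact decide_eq_decide.mpr (exists_congr fun i => by rw [hcon i])
        obtain ⟨i, hfi⟩ := hi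
        have hj : ∃ j : Fin n, C t.succ (Stmt3Aux.idx i j)
            ≠ C t.castSucc (Stmt3Aux.idx i j) := by
          by_contra hcon
          push_neg at hcon
          exact hfi (by rw [funext hcon])
        obtain ⟨j, hj⟩ := hj
        have hflip : (π (Stmt3Aux.idx i j)).1 = t.1 := by
          rw [hπcf t.succ, hπcf t.castSucc] at hj
          simp only [Fin.val_succ, Fin.coe_castSucc] at hj
          by_contra hne
          exact hj (decide_eq_decide.mpr (by omega))
        refine ⟨i, j, fun _ => ⟨hflip, ?_⟩⟩
        have e1 : Stmt3Aux.chainOfPi (ρ i) (ρ i j).succ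
            = fun j' => C t.succ (Stmt3Aux.idx i j') := by
          funext j'
          rw [hπcf t.succ (Stmt3Aux.idx i j')]
          simp only [Stmt3Aux.chainOfPi, Fin.val_succ, Fin.coe_castSucc]
          apply decide_eq_decide.mpr
          have hle := hρleval i j' j
          constructor
          · intro h
            have := hle.mp (by omega)
            omega
          · intro h
            have := hle.mpr (by omega)
            omega
        have e2 : Stmt3Aux.chainOfPi (ρ i) (ρ i j).castSucc
            = fun j' => C t.castSucc (Stmt3Aux.idx i j') := by
          funext j'
          rw [hπcf t.castSucc (Stmt3Aux.idx i j')]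
          simp only [Stmt3Aux.chainOfPi, Fin.val_succ, Fin.coe_castSucc]
          apply decide_eq_decide.mpr
          have hlt := hρltval i j' j
          constructor
          · intro h
            have := hlt.mp h
            omega
          · intro h
            have := hlt.mpr (by omega)
            omega
        rw [e1, e2]
        exact hfi
    choose it jt hsel using hsel
    have hcard : (Finset.univ.filter fun t : Fin (k * n) =>
          F (C t.succ) ≠ F (C t.castSucc)).card ≤
        (Finset.univ.sigma fun i : Fin k => Finset.univ.filter fun r : Fin n =>
          f i (Stmt3Aux.chainOfPi (ρ i) r.succ)
            ≠ f i (Stmt3Aux.chainOfPi (ρ i) r.castSucc)).card := by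
      apply Finset.card_le_card_of_injOn
        (fun t => (⟨it t, ρ (it t) (jt t)⟩ : Σ _ : Fin k, Fin n))
      · intro t ht
        rw [Finset.mem_coe, Finset.mem_filter] at ht
        obtain ⟨hflip, hQ⟩ := hsel t ht.2
        rw [Finset.mem_coe, Finset.mem_sigma]
        exact ⟨Finset.mem_univ _, Finset.mem_filter.mpr ⟨Finset.mem_univ _, hQ⟩⟩
      · intro t ht t' ht' heq
        rw [Finset.mem_coe, Finset.mem_filter] at ht ht'
        obtain ⟨hf1, _⟩ := hsel t ht.2
        obtain ⟨hf1', _⟩ := hsel t' ht'.2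
        have hfst : it t = it t' := congrArg Sigma.fst heq
        have hsnd : ρ (it t) (jt t) = ρ (it t') (jt t') := by
          have := (Sigma.mk.inj_iff.mp heq).2
          exact eq_of_heq this
        rw [← hfst] at hsnd
        have hjj : jt t = jt t' := (hρbij (it t)).1 hsnd
        apply Fin.ext
        rw [← hf1, ← hf1', hfst, hjj]
    rw [Finset.card_sigma] at hcard
    exact le_trans hcard (Finset.sum_le_sum fun i _ =>
      Stmt3Aux.altChain_le_altF (hxchain i))
  · -- lower bound
    choose Ci hCi hAi using fun i => Stmt3Aux.exists_max_chain (f i)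
    choose π hπbij hπcf using fun i => Stmt3Aux.exists_pi (hCi i)
    set C := Stmt3Aux.chainOfPi (Stmt3Aux.bigPi hn π) with hCdef
    have hCchain : IsChainOn C :=
      Stmt3Aux.isChainOn_chainOfPi _ (Stmt3Aux.bigPi_bijective hn π fun i => (hπbij i).1).2
    have hCval : ∀ (u : Fin (k * n + 1)) (b : Fin k) (j : Fin n),
        C u (Stmt3Aux.idx b j) = decide (b.1 * n + (π b j).1 < u.1) := by
      intro u b j
      simp only [hCdef, Stmt3Aux.chainOfPi]
      rw [Stmt3Aux.bigPi_idx_val]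
    have FC : ∀ (i : Fin k) (s : ℕ), s ≤ n → ∀ (u : Fin (k * n + 1)), u.1 = i.1 * n + s →
        F (C u) = f i (fun j => decide ((π i j).1 < s)) := by
      intro i s hs u hu
      have hlt : ∀ b : Fin k, b.1 < i.1 →
          (fun j : Fin n => C u (Stmt3Aux.idx b j)) = (fun _ => true) := by
        intro b hb
        funext j
        rw [hCval, hu]
        apply decide_eq_true
        calc b.1 * n + (π b j).1 < b.1 * n + n := Nat.add_lt_add_left (Fin.is_lt _) _
          _ = (b.1 + 1) * n := (Nat.succ_mul _ _).symm
          _ ≤ i.1 * n := Nat.mul_le_mul_right n hb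
          _ ≤ i.1 * n + s := Nat.le_add_right _ _
      have hgt : ∀ b : Fin k, i.1 < b.1 →
          (fun j : Fin n => C u (Stmt3Aux.idx b j)) = (fun _ => false) := by
        intro b hb
        funext j
        rw [hCval, hu]
        apply decide_eq_false
        apply Nat.not_lt.mpr
        calc i.1 * n + s ≤ i.1 * n + n := Nat.add_le_add_left hs _
          _ = (i.1 + 1) * n := (Nat.succ_mul _ _).symm
          _ ≤ b.1 * n := Nat.mul_le_mul_right n hb
          _ ≤ b.1 * n + (π b j).1 := Nat.le_add_right _ _
      have heqi : (fun j : Fin n => C u (Stmt3Aux.idx i j))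
          = (fun j => decide ((π i j).1 < s)) := by
        funext j
        rw [hCval, hu]
        apply decide_eq_decide.mpr
        exact Nat.add_lt_add_iff_left
      rw [hFy]
      cases hfi : f i (fun j => decide ((π i j).1 < s)) with
      | true =>
        apply decide_eq_true
        exact ⟨i, by rw [heqi, hfi]⟩
      | false =>
        apply decide_eq_false
        rintro ⟨b, hb⟩
        rcases lt_trichotomy b.1 i.1 with h | h | h
        · rw [hlt b h, h1 b] at hb
          exact absurd hb (by simp)
        · have hbi : b = i := Fin.ext h
          rw [hbi, heqi, hfi] at hb
          exact absurd hb (by simp)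
        · rw [hgt b h, h0 b] at hb
          exact absurd hb (by simp)
    have key : ∀ (i : Fin k) (r : Fin n) (t : Fin (k * n)), t.1 = i.1 * n + r.1 →
        ((F (C t.succ) ≠ F (C t.castSucc)) ↔
          (f i (Ci i r.succ) ≠ f i (Ci i r.castSucc))) := by
      intro i r t ht
      have hs1 : F (C t.succ) = f i (Ci i r.succ) := by
        rw [FC i (r.1 + 1) r.isLt t.succ (by rw [Fin.val_succ, ht, Nat.add_assoc])]
        congr 1
        funext j
        rw [hπcf i r.succ j, Fin.val_succ]
      have hs2 : F (C t.castSucc) = f i (Ci i r.castSucc) := by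
        rw [FC i r.1 (le_of_lt r.isLt) t.castSucc (by rw [Fin.coe_castSucc, ht])]
        congr 1
        funext j
        rw [hπcf i r.castSucc j, Fin.coe_castSucc]
      rw [hs1, hs2]
    have hbij : (Finset.univ.filter fun t : Fin (k * n) =>
          F (C t.succ) ≠ F (C t.castSucc)).card =
        (Finset.univ.sigma fun i : Fin k => Finset.univ.filter fun r : Fin n =>
          f i (Ci i r.succ) ≠ f i (Ci i r.castSucc)).card := by
      apply Finset.card_bij'
        (i := fun t _ => (⟨⟨t.1 / n, (Nat.div_lt_iff_lt_mul hn).mpr t.isLt⟩,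
          ⟨t.1 % n, Nat.mod_lt _ hn⟩⟩ : Σ _ : Fin k, Fin n))
        (j := fun p _ => Stmt3Aux.idx p.1 p.2)
      · intro t ht
        rw [Finset.mem_filter] at ht
        rw [Finset.mem_sigma]
        refine ⟨Finset.mem_univ _, Finset.mem_filter.mpr ⟨Finset.mem_univ _, ?_⟩⟩
        exact (key _ _ t (Nat.div_add_mod' t.1 n).symm).mp ht.2
      · rintro ⟨i, r⟩ hp
        rw [Finset.mem_sigma, Finset.mem_filter] at hp
        rw [Finset.mem_filter]
        refine ⟨Finset.mem_univ _, ?_⟩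
        exact (key i r (Stmt3Aux.idx i r) rfl).mpr hp.2.2
      · intro t ht
        apply Fin.ext
        exact Nat.div_add_mod' t.1 n
      · rintro ⟨i, r⟩ hp
        refine Sigma.ext (Fin.ext ?_) (heq_of_eq (Fin.ext ?_))
        · exact Stmt3Aux.div_helper hn _ _ r.isLt
        · exact Stmt3Aux.mod_helper _ _ r.isLt
    rw [Finset.card_sigma] at hbij
    have hfin : altChain F C = ∑ i : Fin k, altChain (f i) (Ci i) := hbij
    calc ∑ i : Fin k, altF (f i) = ∑ i : Fin k, altChain (f i) (Ci i) :=
          Finset.sum_congr rfl (fun i _ => (hAi i).symm)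
      _ = altChain F C := hfin.symm
      _ ≤ altF F := Stmt3Aux.altChain_le_altF hCchain
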